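/- arXiv:1704.05226 — 3 statements merged into one kernel-verified Lean document; each statement's English description precedes it below -/
import Mathlib

section
/- For every object $[q]$ of $\Delta$, the comma category $f/[q]$ (the left fiber of the functor $f \colon P \to \Delta$ at $[q]$) is nonempty and connected; more precisely, any two objects of $f/[q]$ can be joined by a zigzag of morphisms. -/
open CategoryTheory

/-- The poset `P` of nonempty finite subsets of `ℕ`, ordered by inclusion. -/
abbrev NonemptyFinset := {T : Finset ℕ // T.Nonempty}

theorem card_eq (T : NonemptyFinset) : T.1.card = T.1.card - 1 + 1 :=
  (Nat.succ_pred_eq_of_pos (Finset.card_pos.mpr T.2)).symm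

namespace LeftFiberAux

/-- Singleton object of `P`. -/
def sing (t : ℕ) : NonemptyFinset := ⟨{t}, Finset.singleton_nonempty t⟩

/-- Pair object of `P`. -/
def pr (a b : ℕ) : NonemptyFinset := ⟨{a, b}, Finset.insert_nonempty a {b}⟩

lemma sing_emb (t : ℕ) (j : Fin ((sing t).1.card - 1 + 1)) :
    (sing t).1.orderEmbOfFin (card_eq (sing t)) j = t :=
  Finset.mem_singleton.mp (Finset.orderEmbOfFin_mem _ _ j)

lemma pr_min (a b : ℕ) (hab : a < b) :
    (pr a b).1.orderEmbOfFin (card_eq (pr a b)) ⟨0, Nat.succ_pos _⟩ = a := by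
  rw [Finset.orderEmbOfFin_zero]
  apply le_antisymm
  · exact Finset.min'_le _ a (by simp [pr])
  · apply Finset.le_min'
    intro y hy
    simp only [pr, Finset.mem_insert, Finset.mem_singleton] at hy
    rcases hy with rfl | rfl <;> omega

lemma pr_emb_eq_min {a b : ℕ} (hab : a < b) (k : Fin ((pr a b).1.card - 1 + 1))
    (hk : (pr a b).1.orderEmbOfFin (card_eq (pr a b)) k = a) : (k : ℕ) = 0 := by
  by_contra hne
  have h0 : (⟨0, Nat.succ_pos _⟩ : Fin ((pr a b).1.card - 1 + 1)) < k := by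
    exact Fin.mk_lt_of_lt_val (Nat.pos_of_ne_zero hne)
  have := ((pr a b).1.orderEmbOfFin (card_eq (pr a b))).strictMono h0
  rw [pr_min a b hab, hk] at this
  exact lt_irrefl _ this

lemma pr_emb_ne_zero {a b : ℕ} (hab : a < b) (k : Fin ((pr a b).1.card - 1 + 1))
    (hk : (pr a b).1.orderEmbOfFin (card_eq (pr a b)) k = b) : (k : ℕ) ≠ 0 := by
  intro h0
  have : k = ⟨0, Nat.succ_pos _⟩ := Fin.ext h0
  rw [this, pr_min a b hab] at hk
  omega

variable (F : NonemptyFinset ⥤ SimplexCategory)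
  (hobj : ∀ T, F.obj T = SimplexCategory.mk (T.1.card - 1))
  (q : ℕ)

/-- Objects of the left fiber built from an order-hom. -/
def mkObj (T : NonemptyFinset) (g : Fin (T.1.card - 1 + 1) →o Fin (q + 1)) :
    CostructuredArrow F (SimplexCategory.mk q) :=
  CostructuredArrow.mk (eqToHom (hobj T) ≫ SimplexCategory.mkHom g)

/-- Morphisms between such objects. -/
def mkHom {T T' : NonemptyFinset} (hle : T ≤ T')
    (g : Fin (T.1.card - 1 + 1) →o Fin (q + 1))
    (g' : Fin (T'.1.card - 1 + 1) →o Fin (q + 1))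
    (hg : ∀ j, g' ((SimplexCategory.Hom.toOrderHom
        (eqToHom (hobj T).symm ≫ F.map (homOfLE hle) ≫ eqToHom (hobj T'))) j) = g j) :
    mkObj F hobj q T g ⟶ mkObj F hobj q T' g' :=
  CostructuredArrow.homMk (homOfLE hle) (by
    dsimp [mkObj]
    have key : (SimplexCategory.Hom.mk g :
          SimplexCategory.mk (T.1.card - 1) ⟶ SimplexCategory.mk q) =
        (eqToHom (hobj T).symm ≫ F.map (homOfLE hle) ≫ eqToHom (hobj T')) ≫
          (SimplexCategory.Hom.mk g' :
            SimplexCategory.mk (T'.1.card - 1) ⟶ SimplexCategory.mk q) := by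
      apply SimplexCategory.Hom.ext
      ext j
      have h := congrArg Fin.val (hg j)
      simp only [SimplexCategory.Hom.toOrderHom_mk] at h ⊢
      simp at h ⊢
      omega
    rw [key]
    simp)

/-- The "pair" order-hom: `0 ↦ i`, everything else `↦ Fin.last q`. -/
def g₂ {n : ℕ} (i : Fin (q + 1)) : Fin n →o Fin (q + 1) :=
  ⟨fun j => if (j : ℕ) = 0 then i else Fin.last q, by
    intro a b hab
    dsimp only
    by_cases ha : (a : ℕ) = 0
    · by_cases hb : (b : ℕ) = 0
      · simp [ha, hb]
      · simp [ha, hb, Fin.le_last]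
    · have hb : (b : ℕ) ≠ 0 := by
        intro h
        exact ha (Nat.le_zero.mp (h ▸ hab))
      simp [ha, hb]⟩

lemma g₂_of_eq {n : ℕ} (i : Fin (q + 1)) (k : Fin n) (h : (k : ℕ) = 0) :
    g₂ q i k = i := if_pos h

lemma g₂_of_ne {n : ℕ} (i : Fin (q + 1)) (k : Fin n) (h : (k : ℕ) ≠ 0) :
    g₂ q i k = Fin.last q := if_neg h

end LeftFiberAux

open LeftFiberAux in
theorem leftFiber_isConnected
    (F : NonemptyFinset ⥤ SimplexCategory)
    (hobj : ∀ T, F.obj T = SimplexCategory.mk (T.1.card - 1))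
    (hmap : ∀ (T T' : NonemptyFinset) (h : T ⟶ T') (j : Fin (T.1.card - 1 + 1)),
      T'.1.orderEmbOfFin (card_eq T')
          ((SimplexCategory.Hom.toOrderHom
            (eqToHom (hobj T).symm ≫ F.map h ≫ eqToHom (hobj T'))) j)
        = T.1.orderEmbOfFin (card_eq T) j)
    (q : ℕ) :
    IsConnected (CostructuredArrow F (SimplexCategory.mk q)) := by
  set Z := mkObj F hobj q (sing 0) (OrderHom.const _ (Fin.last q)) with hZ
  have : Nonempty (CostructuredArrow F (SimplexCategory.mk q)) := ⟨Z⟩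
  apply zigzag_isConnected
  suffices H : ∀ X, Zigzag X Z by
    intro X Y
    exact (H X).trans (zigzag_symmetric.symm _ _ (H Y))
  intro X
  set T : NonemptyFinset := X.left with hT
  set g : Fin (T.1.card - 1 + 1) →o Fin (q + 1) :=
    (SimplexCategory.Hom.toOrderHom (eqToHom (hobj T).symm ≫ X.hom)) with hg
  have hX : X = mkObj F hobj q T g := by
    rw [CostructuredArrow.eq_mk X]
    dsimp [mkObj]
    congr 1
    have : (SimplexCategory.Hom.mk g :
          SimplexCategory.mk (T.1.card - 1) ⟶ SimplexCategory.mk q) =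
        eqToHom (hobj T).symm ≫ X.hom := by
      apply SimplexCategory.Hom.ext
      rfl
    rw [this]
    simp
  set t₀ : ℕ := T.1.orderEmbOfFin (card_eq T) ⟨0, Nat.succ_pos _⟩ with ht₀
  set i : Fin (q + 1) := g ⟨0, Nat.succ_pos _⟩ with hi
  -- step 1 : sing t₀ → T
  have hle1 : sing t₀ ≤ T := by
    show ({t₀} : Finset ℕ) ⊆ T.1
    exact Finset.singleton_subset_iff.mpr
      (Finset.orderEmbOfFin_mem T.1 (card_eq T) ⟨0, Nat.succ_pos _⟩)
  have m1 : mkObj F hobj q (sing t₀) (OrderHom.const _ i) ⟶ mkObj F hobj q T g := by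
    refine mkHom F hobj q hle1 _ _ ?_
    intro j
    have hphi := hmap (sing t₀) T (homOfLE hle1) j
    rw [sing_emb] at hphi
    have : (SimplexCategory.Hom.toOrderHom
        (eqToHom (hobj (sing t₀)).symm ≫ F.map (homOfLE hle1) ≫ eqToHom (hobj T))) j
        = ⟨0, Nat.succ_pos _⟩ :=
      (T.1.orderEmbOfFin (card_eq T)).injective (by rw [hphi, ← ht₀])
    rw [this]
    rfl
  -- step 2 : sing t₀ → pr t₀ (t₀+1)
  have hle2 : sing t₀ ≤ pr t₀ (t₀ + 1) := by
    show ({t₀} : Finset ℕ) ⊆ {t₀, t₀ + 1}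
    intro x hx
    simp at hx
    simp [hx]
  have m2 : mkObj F hobj q (sing t₀) (OrderHom.const _ i) ⟶
      mkObj F hobj q (pr t₀ (t₀ + 1)) (g₂ q i) := by
    refine mkHom F hobj q hle2 _ _ ?_
    intro j
    have hphi := hmap (sing t₀) (pr t₀ (t₀ + 1)) (homOfLE hle2) j
    rw [sing_emb] at hphi
    have h0 := pr_emb_eq_min (Nat.lt_succ_self t₀) _ hphi
    exact g₂_of_eq q i _ h0
  -- step 3 : sing (t₀+1) → pr t₀ (t₀+1)
  have hle3 : sing (t₀ + 1) ≤ pr t₀ (t₀ + 1) := by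
    show ({t₀ + 1} : Finset ℕ) ⊆ {t₀, t₀ + 1}
    intro x hx
    simp at hx
    simp [hx]
  have m3 : mkObj F hobj q (sing (t₀ + 1)) (OrderHom.const _ (Fin.last q)) ⟶
      mkObj F hobj q (pr t₀ (t₀ + 1)) (g₂ q i) := by
    refine mkHom F hobj q hle3 _ _ ?_
    intro j
    have hphi := hmap (sing (t₀ + 1)) (pr t₀ (t₀ + 1)) (homOfLE hle3) j
    rw [sing_emb] at hphi
    have h0 := pr_emb_ne_zero (Nat.lt_succ_self t₀) _ hphi
    exact g₂_of_ne q i _ h0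
  -- step 4 : sing (t₀+1) → pr 0 (t₀+1), constant maps
  have hle4 : sing (t₀ + 1) ≤ pr 0 (t₀ + 1) := by
    show ({t₀ + 1} : Finset ℕ) ⊆ {0, t₀ + 1}
    intro x hx
    simp at hx
    simp [hx]
  have m4 : mkObj F hobj q (sing (t₀ + 1)) (OrderHom.const _ (Fin.last q)) ⟶
      mkObj F hobj q (pr 0 (t₀ + 1)) (OrderHom.const _ (Fin.last q)) :=
    mkHom F hobj q hle4 _ _ (fun _ => rfl)
  -- step 5 : sing 0 → pr 0 (t₀+1), constant maps
  have hle5 : sing 0 ≤ pr 0 (t₀ + 1) := by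
    show ({0} : Finset ℕ) ⊆ {0, t₀ + 1}
    intro x hx
    simp at hx
    simp [hx]
  have m5 : Z ⟶ mkObj F hobj q (pr 0 (t₀ + 1)) (OrderHom.const _ (Fin.last q)) :=
    mkHom F hobj q hle5 _ _ (fun _ => rfl)
  rw [hX]
  have z1 : Zag (mkObj F hobj q T g)
      (mkObj F hobj q (sing t₀) (OrderHom.const _ i)) := Or.inr ⟨m1⟩
  have z2 : Zag (mkObj F hobj q (sing t₀) (OrderHom.const _ i))
      (mkObj F hobj q (pr t₀ (t₀ + 1)) (g₂ q i)) := Or.inl ⟨m2⟩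
  have z3 : Zag (mkObj F hobj q (pr t₀ (t₀ + 1)) (g₂ q i))
      (mkObj F hobj q (sing (t₀ + 1)) (OrderHom.const _ (Fin.last q))) := Or.inr ⟨m3⟩
  have z4 : Zag (mkObj F hobj q (sing (t₀ + 1)) (OrderHom.const _ (Fin.last q)))
      (mkObj F hobj q (pr 0 (t₀ + 1)) (OrderHom.const _ (Fin.last q))) := Or.inl ⟨m4⟩
  have z5 : Zag (mkObj F hobj q (pr 0 (t₀ + 1)) (OrderHom.const _ (Fin.last q))) Z :=
    Or.inr ⟨m5⟩
  exact (Relation.ReflTransGen.single z1).trans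
    ((Relation.ReflTransGen.single z2).trans
      ((Relation.ReflTransGen.single z3).trans
        ((Relation.ReflTransGen.single z4).trans
          (Relation.ReflTransGen.single z5))))
end

section
/- Let $Y^\bullet$ be a cosimplicial abelian group and let $f \colon P \to \Delta$ be the functor sending a nonempty finite subset $T \subset \mathbb{N}$ of cardinality $q+1$ to $[q]$. Then for $s = 0$, the canonical map $f^* \colon \lim_{\Delta} Y^\bullet \to \lim_P (Y^\bullet \circ f)$ is an isomorphism of abelian groups. -/
open CategoryTheory

lemma aux_const (Y : SimplexCategory ⥤ AddCommGrpCat) (z : Y.obj (SimplexCategory.mk 0))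
    (hz : Y.map (SimplexCategory.δ 0) z = Y.map (SimplexCategory.δ 1) z)
    {n : ℕ} (f g : SimplexCategory.mk 0 ⟶ SimplexCategory.mk n) :
    Y.map f z = Y.map g z := by
  open SimplexCategory in
  suffices H : ∀ f : SimplexCategory.mk 0 ⟶ SimplexCategory.mk n,
      Y.map f z = Y.map (SimplexCategory.const _ (SimplexCategory.mk n) 0) z by rw [H f, H g]
  open SimplexCategory in
  intro f
  rw [SimplexCategory.eq_const_of_zero f]
  set i := f.toOrderHom 0 with hi
  have h1 : SimplexCategory.δ (1:Fin 2) ≫ SimplexCategory.mkOfLe 0 i (Fin.zero_le i)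
      = SimplexCategory.const _ (SimplexCategory.mk n) 0 :=
    SimplexCategory.Hom.ext_zero_left _ _ rfl
  have h0 : SimplexCategory.δ (0:Fin 2) ≫ SimplexCategory.mkOfLe 0 i (Fin.zero_le i)
      = SimplexCategory.const _ (SimplexCategory.mk n) i :=
    SimplexCategory.Hom.ext_zero_left _ _ rfl
  calc Y.map (SimplexCategory.const _ (SimplexCategory.mk n) i) z
      = Y.map (SimplexCategory.mkOfLe 0 i (Fin.zero_le i)) (Y.map (SimplexCategory.δ (0:Fin 2)) z) := by
        rw [← comp_apply, ← Y.map_comp, h0]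
    _ = Y.map (SimplexCategory.mkOfLe 0 i (Fin.zero_le i)) (Y.map (SimplexCategory.δ (1:Fin 2)) z) := by rw [hz]
    _ = Y.map (SimplexCategory.const _ (SimplexCategory.mk n) 0) z := by
        rw [← comp_apply, ← Y.map_comp, h1]

lemma aux_retract (Y : SimplexCategory ⥤ AddCommGrpCat) {x : SimplexCategory}
    (f : SimplexCategory.mk 0 ⟶ x) (a : Y.obj (SimplexCategory.mk 0)) :
    Y.map (SimplexCategory.const x (SimplexCategory.mk 0) 0) (Y.map f a) = a := by
  rw [← comp_apply, ← Y.map_comp,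
    SimplexCategory.hom_zero_zero (f ≫ SimplexCategory.const x (SimplexCategory.mk 0) 0),
    Y.map_id]
  rfl

/-- singleton object of `P` -/
def sing (t : ℕ) : NonemptyFinset := ⟨{t}, Finset.singleton_nonempty t⟩

set_option maxHeartbeats 1600000 in
/-- Let `Y` be a cosimplicial abelian group and
`f : P ⥤ Δ` the functor sending a nonempty finite subset `T ⊆ ℕ` with
`|T| = q+1` to `[q]` (characterized below by `hobj`, `hmap`).  The limit
`lim_Δ Y` is the equalizer of the two cofaces `d⁰, d¹ : Y⁰ → Y¹`, and
`lim_P (Y ∘ f)` is the set of sections of the `P`-shaped diagram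
`T ↦ Y^{|T|-1}`.  The canonical map `f*`, sending `z` in the equalizer to the
family `T ↦ Y(c_T)(z)` (where `c_T : [0] → f(T)` is the zeroth-vertex map),
is a bijection from the equalizer onto the set of sections. -/
theorem lim_comparison_s_zero
    (F : NonemptyFinset ⥤ SimplexCategory)
    (hobj : ∀ T, F.obj T = SimplexCategory.mk (T.1.card - 1))
    (hmap : ∀ (T T' : NonemptyFinset) (h : T ⟶ T') (j : Fin (T.1.card - 1 + 1)),
      T'.1.orderEmbOfFin (card_eq T')
          ((SimplexCategory.Hom.toOrderHom
            (eqToHom (hobj T).symm ≫ F.map h ≫ eqToHom (hobj T'))) j)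
        = T.1.orderEmbOfFin (card_eq T) j)
    (Y : SimplexCategory ⥤ AddCommGrpCat) :
    Set.BijOn
      (fun (z : Y.obj (SimplexCategory.mk 0)) =>
        (fun T => Y.map
          (SimplexCategory.const (SimplexCategory.mk 0) (SimplexCategory.mk (T.1.card - 1)) 0
            ≫ eqToHom (hobj T).symm) z : ∀ T, (F ⋙ Y ⋙ forget AddCommGrpCat).obj T))
      {z | Y.map (SimplexCategory.δ 0) z = Y.map (SimplexCategory.δ 1) z}
      (F ⋙ Y ⋙ forget AddCommGrpCat).sections := by
  refine ⟨?_, ?_, ?_⟩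
  · -- MapsTo
    intro z hz
    intro T T' h
    show Y.map (F.map h)
        (Y.map (SimplexCategory.const _ (SimplexCategory.mk (T.1.card - 1)) 0
          ≫ eqToHom (hobj T).symm) z)
      = Y.map (SimplexCategory.const _ (SimplexCategory.mk (T'.1.card - 1)) 0
          ≫ eqToHom (hobj T').symm) z
    rw [← comp_apply, ← Y.map_comp]
    have hfac : (SimplexCategory.const (SimplexCategory.mk 0) (SimplexCategory.mk (T.1.card - 1)) 0
          ≫ eqToHom (hobj T).symm) ≫ F.map h
        = (SimplexCategory.const (SimplexCategory.mk 0) (SimplexCategory.mk (T.1.card - 1)) 0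
            ≫ (eqToHom (hobj T).symm ≫ F.map h ≫ eqToHom (hobj T')))
          ≫ eqToHom (hobj T').symm := by
      simp only [Category.assoc, eqToHom_trans, eqToHom_refl, Category.comp_id]
    rw [hfac, SimplexCategory.const_comp]
    simp only [Functor.map_comp, comp_apply]
    exact congrArg _ (aux_const Y z hz _ _)
  · -- InjOn
    intro z1 _ z2 _ heq
    have h := congrFun heq (sing 0)
    have h1 := congrArg (⇑(Y.map (SimplexCategory.const (F.obj (sing 0))
      (SimplexCategory.mk 0) 0))) h
    rwa [aux_retract, aux_retract] at h1
  · -- SurjOn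
    intro u hu
    have hsub : ∀ t (T : NonemptyFinset), t ∈ T.1 → sing t ≤ T := by
      intro t T ht
      exact Subtype.mk_le_mk.mpr (Finset.singleton_subset_iff.mpr ht)
    have hC : ∀ t (T : NonemptyFinset) (ht : t ∈ T.1),
        ∃ i : Fin (T.1.card - 1 + 1), T.1.orderEmbOfFin (card_eq T) i = t ∧
          u T = Y.map (SimplexCategory.const (SimplexCategory.mk 0)
              (SimplexCategory.mk (T.1.card - 1)) i ≫ eqToHom (hobj T).symm)
            (Y.map (eqToHom (hobj (sing t))) (u (sing t))) := by
      intro t T ht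
      set gg : SimplexCategory.mk 0 ⟶ SimplexCategory.mk (T.1.card - 1) :=
        eqToHom (hobj (sing t)).symm ≫ F.map (homOfLE (hsub t T ht)) ≫ eqToHom (hobj T) with hgg
      refine ⟨gg.toOrderHom 0, ?_, ?_⟩
      · exact (hmap (sing t) T (homOfLE (hsub t T ht)) 0).trans
          (Finset.mem_singleton.mp (Finset.orderEmbOfFin_mem _ (card_eq (sing t)) 0))
      · have hs := hu (homOfLE (hsub t T ht))
        rw [← hs]
        have hcc : SimplexCategory.const (SimplexCategory.mk 0)
              (SimplexCategory.mk (T.1.card - 1)) (gg.toOrderHom 0) ≫ eqToHom (hobj T).symm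
            = eqToHom (hobj (sing t)).symm ≫ F.map (homOfLE (hsub t T ht)) := by
          rw [← SimplexCategory.eq_const_of_zero gg, hgg]
          simp
          rfl
        rw [hcc]
        show Y.map (F.map (homOfLE (hsub t T ht))) (u (sing t))
          = Y.map (eqToHom (hobj (sing t)).symm ≫ F.map (homOfLE (hsub t T ht)))
            (Y.map (eqToHom (hobj (sing t))) (u (sing t)))
        rw [← comp_apply, ← Y.map_comp, ← Category.assoc, eqToHom_trans, eqToHom_refl,
          Category.id_comp]
    have hA : ∀ t : ℕ, (Y.map (eqToHom (hobj (sing t))) (u (sing t)) : Y.obj (SimplexCategory.mk 0))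
        = Y.map (eqToHom (hobj (sing 0))) (u (sing 0)) := by
      intro t
      obtain ⟨i, hi, hui⟩ := hC t ⟨{0, t}, by simp⟩ (by simp)
      obtain ⟨i0, hi0, hui0⟩ := hC 0 ⟨{0, t}, by simp⟩ (by simp)
      have h := congrArg (⇑(Y.map (SimplexCategory.const (F.obj (⟨{0, t}, by simp⟩ : NonemptyFinset))
        (SimplexCategory.mk 0) 0))) (hui.symm.trans hui0)
      erw [aux_retract, aux_retract] at h
      exact h
    set z : Y.obj (SimplexCategory.mk 0) := Y.map (eqToHom (hobj (sing 0))) (u (sing 0)) with hzdef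
    have hz : Y.map (SimplexCategory.δ 0) z = Y.map (SimplexCategory.δ 1) z := by
      set TT : NonemptyFinset := ⟨{0, 1}, by simp⟩ with hTT
      have hcards : TT.1.card - 1 + 1 = 2 := rfl
      obtain ⟨i0, hv0, hu0⟩ := hC 0 TT (by rw [hTT]; simp)
      obtain ⟨i1, hv1, hu1⟩ := hC 1 TT (by rw [hTT]; simp)
      rw [hA 1] at hu1
      rw [hA 0] at hu0
      have e2 : Y.map (SimplexCategory.const (SimplexCategory.mk 0)
            (SimplexCategory.mk (TT.1.card - 1)) i0) z
          = Y.map (SimplexCategory.const (SimplexCategory.mk 0)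
            (SimplexCategory.mk (TT.1.card - 1)) i1) z := by
        have h := congrArg (⇑(Y.map (eqToHom (hobj TT)))) (hu0.symm.trans hu1)
        rw [← comp_apply, ← Y.map_comp, ← comp_apply, ← Y.map_comp, Category.assoc,
          Category.assoc, eqToHom_trans, eqToHom_refl, Category.comp_id, Category.comp_id] at h
        exact h
      have hlt : i0 < i1 := by
        have h01 : ((TT.1.orderEmbOfFin (card_eq TT)) i0 : ℕ)
            < (TT.1.orderEmbOfFin (card_eq TT)) i1 := by rw [hv0, hv1]; norm_num
        exact (OrderEmbedding.lt_iff_lt _).mp h01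
      have hi1lt : (i1 : ℕ) < TT.1.card - 1 + 1 := i1.isLt
      have hlt' := Fin.lt_iff_val_lt_val.mp hlt
      have hval0 : (i0 : ℕ) = 0 := by omega
      have hval1 : (i1 : ℕ) = 1 := by omega
      have h0 : i0 = ⟨0, by omega⟩ := Fin.ext (by rw [hval0])
      have h1 : i1 = ⟨1, by omega⟩ := Fin.ext (by rw [hval1])
      rw [h0, h1] at e2
      have d0 : SimplexCategory.δ (0 : Fin 2) = SimplexCategory.const (SimplexCategory.mk 0)
          (SimplexCategory.mk (TT.1.card - 1))
          ⟨1, by rw [SimplexCategory.len_mk]; omega⟩ := SimplexCategory.Hom.ext_zero_left _ _ rfl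
      have d1 : SimplexCategory.δ (1 : Fin 2) = SimplexCategory.const (SimplexCategory.mk 0)
          (SimplexCategory.mk (TT.1.card - 1))
          ⟨0, by rw [SimplexCategory.len_mk]; omega⟩ := SimplexCategory.Hom.ext_zero_left _ _ rfl
      rw [d0, d1]
      exact e2.symm
    refine ⟨z, hz, ?_⟩
    funext T
    obtain ⟨i, hvi, hui⟩ := hC (T.1.min' T.2) T (T.1.min'_mem T.2)
    have hizero : i = 0 := by
      have h0' : T.1.orderEmbOfFin (card_eq T) 0 = T.1.min' T.2 := by
        have h := Finset.orderEmbOfFin_zero (card_eq T) (Nat.succ_pos _)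
        convert h using 2
        rfl
      exact (T.1.orderEmbOfFin (card_eq T)).injective (hvi.trans h0'.symm)
    rw [hizero, hA] at hui
    exact hui.symm
end

section
/- Let $R \to B$ be a map of commutative rings that is a $G$-Galois extension for a finite group $G$ acting on $B$ by $R$-algebra maps, in the sense that the natural map $B \otimes_R B \to \prod_{g \in G} B$, $x \otimes y \mapsto (x \cdot g(y))_g$, is an isomorphism. Then for each $q \geq 0$ there is a natural isomorphism of $R$-algebras $B^{\otimes_R (q+1)} \cong \prod_{G^q} B$, and under these isomorphisms the Amitsur complex of $R \to B$ is isomorphic to the complex computing group cohomology: $\pi^s$ of the cosimplicial abelian group $[q] \mapsto B^{\otimes_R(q+1)}$ is isomorphic to $H^s(G; B)$ for all $s \geq 0$. -/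
open TensorProduct

section Cohom

/-- Cohomology of a (piece of a) cochain complex at the middle spot:
`ker(dnext) / im(dprev)`. -/
def cohomAt {M N P : Type*} [AddCommGroup M] [AddCommGroup N] [AddCommGroup P]
    (dprev : M →+ N) (dnext : N →+ P) : Type _ :=
  dnext.ker ⧸ dprev.range.addSubgroupOf dnext.ker

noncomputable instance {M N P : Type*} [AddCommGroup M] [AddCommGroup N] [AddCommGroup P]
    (dprev : M →+ N) (dnext : N →+ P) : AddCommGroup (cohomAt dprev dnext) := by
  unfold cohomAt; infer_instance

end Cohom

variable (R B : Type) [CommRing R] [CommRing B] [Algebra R B]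
variable (G : Type) [Group G] [Finite G] [MulSemiringAction G B]

/-- `BPow R B q = B^{⊗_R (q+1)}`, as an `R`-algebra. -/
noncomputable def BPow : ℕ → AlgCat R
  | 0 => AlgCat.of R B
  | q + 1 => AlgCat.of R (B ⊗[R] (BPow q))

/-- Coface insertion of `1 ∈ B` into the `i`-th tensor position. -/
noncomputable def faceB : ∀ q : ℕ, Fin (q + 2) → ((BPow R B q : Type) →ₗ[R] BPow R B (q + 1))
  | q, ⟨0, _⟩ => TensorProduct.mk R B (BPow R B q) 1
  | 0, ⟨_ + 1, _⟩ => (TensorProduct.mk R B B).flip 1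
  | q + 1, ⟨i + 1, _⟩ => LinearMap.lTensor B (faceB q ⟨i, by omega⟩)

/-- The Amitsur coboundary `δ = ∑ (-1)^i d^i : B^{⊗(q+1)} → B^{⊗(q+2)}`. -/
noncomputable def amitsurD (q : ℕ) : (BPow R B q : Type) →+ BPow R B (q + 1) :=
  (∑ i : Fin (q + 2), ((-1 : ℤ) ^ (i : ℕ)) • faceB R B q i).toAddMonoidHom

/-- The map `B ⊗_R B → ∏_{g ∈ G} B`, `x ⊗ y ↦ (x · g(y))_g`; the extension
`R → B` is `G`-Galois precisely when this is bijective. -/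
noncomputable def galMap (hfix : ∀ (g : G) (r : R), g • algebraMap R B r = algebraMap R B r) :
    B ⊗[R] B →ₗ[R] (G → B) :=
  TensorProduct.lift
    { toFun := fun x =>
        { toFun := fun y g => x * g • y
          map_add' := fun y₁ y₂ => by funext g; simp [smul_add, mul_add]
          map_smul' := fun r y => by
            funext g
            simp only [RingHom.id_apply, Pi.smul_apply, Algebra.smul_def, mul_smul_comm]
            rw [smul_mul', hfix g r]
            ring }
      map_add' := fun x₁ x₂ => by ext y g; simp [add_mul]
      map_smul' := fun r x => by ext y g; simp [Algebra.smul_def]; ring }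

/-- The standard (inhomogeneous) group cochain complex `C^q(G; B) = Map(G^q, B)`,
which computes the same cohomology as the homogeneous complex `Map(G^{q+1}, B)^G`. -/
abbrev groupCochain (q : ℕ) : Type := (Fin q → G) → B

/-- The group cohomology coboundary on inhomogeneous cochains. -/
noncomputable def groupD (q : ℕ) : groupCochain B G q →+ groupCochain B G (q + 1) where
  toFun f g :=
    g 0 • f (fun i => g i.succ)
      + (∑ i : Fin q, ((-1 : ℤ) ^ ((i : ℕ) + 1)) •
          f (fun j => if (j : ℕ) < (i : ℕ) then g j.castSucc
            else if (j : ℕ) = (i : ℕ) then g j.castSucc * g j.succ else g j.succ))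
      + ((-1 : ℤ) ^ (q + 1)) • f (fun j => g j.castSucc)
  map_zero' := by
    funext g
    simp
  map_add' f₁ f₂ := by
    funext g
    simp only [Pi.add_apply, smul_add, Finset.sum_add_distrib]
    abel


section Aux

set_option linter.unusedSectionVars false
set_option linter.unusedVariables false

variable {R B : Type} [CommRing R] [CommRing B] [Algebra R B]
variable {G : Type} [Group G] [Finite G] [MulSemiringAction G B]

lemma gsmul_rsmul (hfix : ∀ (g : G) (r : R), g • algebraMap R B r = algebraMap R B r)
    (g : G) (r : R) (b : B) : g • (r • b) = r • (g • b) := by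
  rw [Algebra.smul_def, Algebra.smul_def, smul_mul', hfix]

/-- The twist algebra hom `f ↦ fun g => g 0 • f (g ∘ succ)`. -/
noncomputable def twistHom (hfix : ∀ (g : G) (r : R), g • algebraMap R B r = algebraMap R B r)
    (q : ℕ) : ((Fin q → G) → B) →ₐ[R] ((Fin (q + 1) → G) → B) where
  toFun f g := g 0 • f (fun i => g i.succ)
  map_one' := funext fun g => smul_one _
  map_mul' f₁ f₂ := funext fun g => smul_mul' _ _ _
  map_zero' := funext fun g => smul_zero _
  map_add' f₁ f₂ := funext fun g => smul_add _ _ _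
  commutes' r := funext fun g => hfix (g 0) r

/-- The comparison algebra map `B^{⊗(q+1)} →ₐ (G^q → B)`. -/
noncomputable def chi (hfix : ∀ (g : G) (r : R), g • algebraMap R B r = algebraMap R B r) :
    ∀ q : ℕ, ((BPow R B q : Type) →ₐ[R] ((Fin q → G) → B))
  | 0 => Pi.constAlgHom R (Fin 0 → G) B
  | q + 1 => Algebra.TensorProduct.productMap (Pi.constAlgHom R (Fin (q + 1) → G) B)
      ((twistHom hfix q).comp (chi hfix q))

variable (hfix : ∀ (g : G) (r : R), g • algebraMap R B r = algebraMap R B r)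

lemma chi_zero_apply (b : B) (g : Fin 0 → G) : chi hfix 0 b g = b := rfl

lemma chi_succ_tmul (q : ℕ) (b : B) (t : (BPow R B q : Type)) :
    chi hfix (q + 1) ((b ⊗ₜ[R] t : B ⊗[R] (BPow R B q)) : (BPow R B (q+1) : Type))
      = fun g => b * g 0 • chi hfix q t (fun i => g i.succ) := rfl

/-- Reindexing `(G^q → (G → B)) ≃ (G^{q+1} → B)`. -/
def reindexEquiv (q : ℕ) : ((Fin q → G) → G → B) ≃ ((Fin (q + 1) → G) → B) where
  toFun F g := F (fun i => g i.succ) (g 0)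
  invFun f h g0 := f (Fin.cons g0 h)
  left_inv F := by funext h g0; simp
  right_inv f := funext fun g => congrArg f (Fin.cons_self_tail g)

/-- Reindexing, as a linear map. -/
def reindexLin (q : ℕ) : ((Fin q → G) → G → B) →ₗ[R] ((Fin (q + 1) → G) → B) where
  toFun F g := F (fun i => g i.succ) (g 0)
  map_add' _ _ := rfl
  map_smul' _ _ := rfl

lemma chi_bijective (hGal : Function.Bijective (galMap R B G hfix)) :
    ∀ q, Function.Bijective (chi hfix q) := by
  intro q
  induction q with
  | zero =>
    constructor
    · exact fun a b h => congrFun h (fun i => i.elim0)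
    · exact fun f => ⟨f (fun i => i.elim0), funext fun x => congrArg f (Subsingleton.elim _ _)⟩
  | succ q ih =>
    haveI : Fintype G := Fintype.ofFinite G
    haveI : DecidableEq (Fin q → G) := Classical.decEq _
    let e1 : (B ⊗[R] (BPow R B q : Type)) ≃ₗ[R] B ⊗[R] ((Fin q → G) → B) :=
      LinearEquiv.lTensor B (LinearEquiv.ofBijective (chi hfix q).toLinearMap ih)
    let e2 := TensorProduct.piRight R R B (fun _ : Fin q → G => B)
    let e3 := LinearEquiv.piCongrRight
      (fun _ : Fin q → G => LinearEquiv.ofBijective (galMap R B G hfix) hGal)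
    have key : (chi hfix (q + 1)).toLinearMap =
        (reindexLin q).comp (e3.toLinearMap.comp (e2.toLinearMap.comp e1.toLinearMap)) :=
      TensorProduct.ext' fun b t => rfl
    have hcoe : ⇑(chi hfix (q + 1)) =
        fun x => reindexLin (R := R) q (e3 (e2 (e1 x))) := funext fun x => DFunLike.congr_fun key x
    rw [hcoe]
    exact (reindexEquiv q).bijective.comp (e3.bijective.comp (e2.bijective.comp e1.bijective))

lemma chi_face_zero (q : ℕ) (x : (BPow R B q : Type)) :
    chi hfix (q + 1) (faceB R B q ⟨0, by omega⟩ x)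
      = fun g => g 0 • chi hfix q x (fun i => g i.succ) := by
  simp only [faceB]
  show chi hfix (q + 1) ((1 : B) ⊗ₜ[R] x : B ⊗[R] (BPow R B q)) = _
  rw [chi_succ_tmul (hfix := hfix) q 1 x]
  funext g
  rw [one_mul]

lemma chi_face_last (q : ℕ) : ∀ x : (BPow R B q : Type),
    chi hfix (q + 1) (faceB R B q ⟨q + 1, by omega⟩ x)
      = fun g => chi hfix q x (fun j => g j.castSucc) := by
  induction q with
  | zero =>
    intro x
    show chi hfix 1 ((x ⊗ₜ[R] (1 : B) : B ⊗[R] B)) = _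
    refine (chi_succ_tmul (hfix := hfix) 0 x 1).trans ?_
    funext g
    simp [chi_zero_apply]
    exact mul_one (M := B) x
  | succ q IH =>
    intro x
    show chi hfix (q + 2) (LinearMap.lTensor B (faceB R B q ⟨q + 1, by omega⟩) x) = _
    induction x using TensorProduct.induction_on with
    | zero => simp only [map_zero]; funext g; rfl
    | add a b ha hb =>
      rw [map_add]; erw [map_add (chi hfix (q + 2)), ha, hb, map_add (chi hfix (q + 1))]; rfl
    | tmul b t =>
      rw [LinearMap.lTensor_tmul]
      rw [chi_succ_tmul (hfix := hfix) (q + 1) b (faceB R B q ⟨q + 1, by omega⟩ t), IH t]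
      funext g
      rfl

lemma chi_face_mid (q : ℕ) : ∀ (i : Fin q) (x : (BPow R B q : Type)),
    chi hfix (q + 1) (faceB R B q ⟨(i : ℕ) + 1, by omega⟩ x)
      = fun g => chi hfix q x (fun j => if (j : ℕ) < (i : ℕ) then g j.castSucc
          else if (j : ℕ) = (i : ℕ) then g j.castSucc * g j.succ else g j.succ) := by
  induction q with
  | zero => exact fun i => i.elim0
  | succ q IH =>
    intro i x
    show chi hfix (q + 2) (LinearMap.lTensor B (faceB R B q ⟨(i : ℕ), by omega⟩) x) = _
    induction x using TensorProduct.induction_on with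
    | zero => simp only [map_zero]; funext g; rfl
    | add a b ha hb =>
      rw [map_add]; erw [map_add (chi hfix (q + 2)), ha, hb, map_add (chi hfix (q + 1))]; rfl
    | tmul b t =>
      rw [LinearMap.lTensor_tmul]
      rcases i with ⟨iv, hiv⟩
      cases iv with
      | zero =>
        rw [chi_succ_tmul (hfix := hfix) (q + 1) b (faceB R B q ⟨0, by omega⟩ t),
          chi_face_zero (hfix := hfix) q t,
          chi_succ_tmul (hfix := hfix) q b t]
        funext g
        simp only
        rw [← mul_smul]
        norm_num
      | succ iv' =>
        rw [chi_succ_tmul (hfix := hfix) (q + 1) b (faceB R B q ⟨iv' + 1, by omega⟩ t),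
          IH ⟨iv', by omega⟩ t,
          chi_succ_tmul (hfix := hfix) q b t]
        funext g
        simp only
        norm_num

lemma chi_comm (q : ℕ) (x : (BPow R B q : Type)) :
    chi hfix (q + 1) (amitsurD R B q x) = groupD B G q (chi hfix q x) := by
  have h1 : chi hfix (q + 1) (amitsurD R B q x)
      = ∑ i : Fin (q + 2), ((-1 : ℤ) ^ (i : ℕ)) • chi hfix (q + 1) (faceB R B q i x) := by
    show chi hfix (q + 1) ((∑ i : Fin (q + 2), ((-1 : ℤ) ^ (i : ℕ)) • faceB R B q i) x) = _
    rw [LinearMap.sum_apply, map_sum]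
    exact Finset.sum_congr rfl fun i _ => by rw [LinearMap.smul_apply, map_zsmul]
  rw [h1, Fin.sum_univ_succ, Fin.sum_univ_castSucc]
  rw [show (0 : Fin (q + 2)) = ⟨0, by omega⟩ from rfl, chi_face_zero (hfix := hfix) q x]
  rw [show ((Fin.last q).succ : Fin (q + 2)) = ⟨q + 1, by omega⟩ from rfl,
    chi_face_last (hfix := hfix) q x]
  simp_rw [show ∀ i : Fin q, (i.castSucc.succ : Fin (q + 2)) = ⟨(i : ℕ) + 1, by omega⟩
      from fun _ => rfl]
  simp_rw [fun i : Fin q => chi_face_mid (hfix := hfix) q i x]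
  funext g
  simp only [Pi.add_apply, Finset.sum_apply, Pi.smul_apply, Fin.val_succ, Fin.coe_castSucc,
    Fin.val_last, Fin.val_zero, pow_zero, one_smul]
  show _ = groupD B G q (chi hfix q x) g
  simp only [groupD, AddMonoidHom.coe_mk, ZeroHom.coe_mk]
  abel

end Aux

section Transport

variable {A A' A'' C C' C'' : Type*} [AddCommGroup A] [AddCommGroup A'] [AddCommGroup A'']
  [AddCommGroup C] [AddCommGroup C'] [AddCommGroup C'']

/-- Transport the kernel of a morphism along a commuting square of isomorphisms. -/
noncomputable def kerEquiv (dA : A →+ A') (dC : C →+ C') (e : A ≃+ C) (e' : A' ≃+ C')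
    (h : ∀ x, e' (dA x) = dC (e x)) : dA.ker ≃+ dC.ker where
  toFun x := ⟨e (x : A), by
    have hx : dA (x : A) = 0 := x.2
    have hh := h (x : A)
    rw [hx, map_zero] at hh
    exact AddMonoidHom.mem_ker.mpr hh.symm⟩
  invFun y := ⟨e.symm y, by
    have hy : dC (y : C) = 0 := y.2
    have hh := h (e.symm (y : C))
    rw [e.apply_symm_apply, hy] at hh
    exact AddMonoidHom.mem_ker.mpr (e'.injective (by rw [hh, map_zero]))⟩
  left_inv x := Subtype.ext (e.symm_apply_apply (x : A))
  right_inv y := Subtype.ext (e.apply_symm_apply (y : C))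
  map_add' x y := Subtype.ext (map_add e (x : A) (y : A))

/-- Transport `cohomAt` along a commuting ladder of isomorphisms. -/
noncomputable def cohomEquiv (dpA : A'' →+ A) (dA : A →+ A') (dpC : C'' →+ C) (dC : C →+ C')
    (e0 : A'' ≃+ C'') (e : A ≃+ C) (e' : A' ≃+ C')
    (h0 : ∀ x, e (dpA x) = dpC (e0 x)) (h : ∀ x, e' (dA x) = dC (e x)) :
    cohomAt dpA dA ≃+ cohomAt dpC dC :=
  QuotientAddGroup.congr _ _ (kerEquiv dA dC e e' h) (by
    ext y
    simp only [AddSubgroup.mem_map, AddSubgroup.mem_addSubgroupOf, AddMonoidHom.mem_range]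
    constructor
    · rintro ⟨x, ⟨a, ha⟩, rfl⟩
      exact ⟨e0 a, by rw [← h0 a, ha]; rfl⟩
    · rintro ⟨c, hc⟩
      refine ⟨⟨e.symm (y : C), ?_⟩, ⟨e0.symm c, ?_⟩, ?_⟩
      · have hy : dC (y : C) = 0 := y.2
        have hh := h (e.symm (y : C))
        rw [e.apply_symm_apply, hy] at hh
        exact AddMonoidHom.mem_ker.mpr (e'.injective (by rw [hh, map_zero]))
      · apply e.injective
        rw [h0, e0.apply_symm_apply, hc, e.apply_symm_apply]
      · exact Subtype.ext (e.apply_symm_apply (y : C)))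

end Transport

/-- Let `R → B` be a `G`-Galois extension of commutative
rings for a finite group `G` acting on `B` by `R`-algebra automorphisms, i.e.
the map `B ⊗_R B → ∏_{g ∈ G} B`, `x ⊗ y ↦ (x · g(y))_g`, is bijective.  Then:
(a) for each `q ≥ 0` there is an isomorphism of `R`-algebras
`B^{⊗_R (q+1)} ≅ ∏_{G^q} B`; and (b) under these isomorphisms the Amitsur
complex of `R → B` computes group cohomology: `π^s` of the cosimplicial
abelian group `[q] ↦ B^{⊗_R (q+1)}` is isomorphic to `H^s(G; B)` for all
`s ≥ 0` (for `s = 0`, both are kernels of the zeroth coboundaries; for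
`s ≥ 1`, both are `ker/im` at spot `s`). -/
theorem amitsur_cohomology_iso_group_cohomology
    (hfix : ∀ (g : G) (r : R), g • algebraMap R B r = algebraMap R B r)
    (hGal : Function.Bijective (galMap R B G hfix)) :
    (∀ q : ℕ, Nonempty ((BPow R B q : Type) ≃ₐ[R] ((Fin q → G) → B))) ∧
    Nonempty ((amitsurD R B 0).ker ≃+ (groupD B G 0).ker) ∧
    (∀ s : ℕ, Nonempty
      (cohomAt (amitsurD R B s) (amitsurD R B (s + 1)) ≃+
        cohomAt (groupD B G s) (groupD B G (s + 1)))) := by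
  have hbij := chi_bijective hfix hGal
  let E : ∀ q, ((BPow R B q : Type) ≃+ ((Fin q → G) → B)) := fun q =>
    AddEquiv.mk' (Equiv.ofBijective _ (hbij q)) (map_add (chi hfix q))
  exact ⟨fun q => ⟨AlgEquiv.ofBijective (chi hfix q) (hbij q)⟩,
    ⟨kerEquiv (amitsurD R B 0) (groupD B G 0) (E 0) (E 1) (fun x => chi_comm hfix 0 x)⟩,
    fun s => ⟨cohomEquiv (amitsurD R B s) (amitsurD R B (s + 1)) (groupD B G s)
      (groupD B G (s + 1)) (E s) (E (s + 1)) (E (s + 2))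
      (fun x => chi_comm hfix s x) (fun x => chi_comm hfix (s + 1) x)⟩⟩
end
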